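/- If policy π* performs at least as well as policy π in the sense that η(π*) ≥ η(π), then the expected discounted sum of advantages of π along trajectories from π* is nonnegative: E_{τ∼π*}[ Σ_{t=0}^∞ γ^t A^π(s_t, a_t) ] ≥ 0. -/

import Mathlib

open scoped BigOperators

/-- A finite, infinite-horizon discounted MDP `(S, A, P, r, ρ0, γ)`. -/
structure MDP (S A : Type) [Fintype S] [Fintype A] where
  P : S → A → S → ℝ
  r : S → ℝ
  ρ0 : S → ℝ
  γ : ℝ
  P_nonneg : ∀ s a s', 0 ≤ P s a s'
  P_sum : ∀ s a, ∑ s', P s a s' = 1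
  ρ0_nonneg : ∀ s, 0 ≤ ρ0 s
  ρ0_sum : ∑ s, ρ0 s = 1
  γ_pos : 0 < γ
  γ_lt_one : γ < 1

variable {S A : Type} [Fintype S] [Fintype A] [DecidableEq S] [DecidableEq A]

/-- A stochastic policy: a probability distribution over actions at each state. -/
def IsPolicy (π : S → A → ℝ) : Prop :=
  (∀ s a, 0 ≤ π s a) ∧ ∀ s, ∑ a, π s a = 1

namespace MDP

/-- Distribution of the state `s_t` when `s_0 ∼ d` and actions are sampled from `π`. -/
def stateDist (M : MDP S A) (π : S → A → ℝ) : ℕ → (S → ℝ) → S → ℝ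
  | 0, d => d
  | t + 1, d => fun s' => ∑ s, ∑ a, M.stateDist π t d s * π s a * M.P s a s'

/-- Dirac distribution concentrated at a state. -/
def dirac (s : S) : S → ℝ := fun x => if x = s then 1 else 0

/-- Value function `V^π(s) = E[∑_t γ^t r(s_t) | s_0 = s]`. -/
noncomputable def V (M : MDP S A) (π : S → A → ℝ) (s : S) : ℝ :=
  ∑' t : ℕ, M.γ ^ t * ∑ s', M.stateDist π t (dirac s) s' * M.r s'

/-- State-action value `Q^π(s,a) = r(s) + γ E_{s'∼P(·|s,a)}[V^π(s')]`. -/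
noncomputable def Q (M : MDP S A) (π : S → A → ℝ) (s : S) (a : A) : ℝ :=
  M.r s + M.γ * ∑ s', M.P s a s' * M.V π s'

/-- Advantage function `A^π(s,a) = Q^π(s,a) − V^π(s)`. -/
noncomputable def Adv (M : MDP S A) (π : S → A → ℝ) (s : S) (a : A) : ℝ :=
  M.Q π s a - M.V π s

/-- Expected discounted return `η(π) = E_{s0∼ρ0}[V^π(s0)]`. -/
noncomputable def η (M : MDP S A) (π : S → A → ℝ) : ℝ :=
  ∑ s, M.ρ0 s * M.V π s

/-- `E_{τ∼π*}[∑_t γ^t A^π(s_t, a_t)]`: expected discounted advantage sum of `π`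
along trajectories generated by `π*` from `ρ0`. -/
noncomputable def advSum (M : MDP S A) (π πStar : S → A → ℝ) : ℝ :=
  ∑' t : ℕ, M.γ ^ t * ∑ s, ∑ a, M.stateDist πStar t M.ρ0 s * πStar s a * M.Adv π s a


set_option linter.unusedSectionVars false

lemma stateDist_nonneg (M : MDP S A) {π : S → A → ℝ} (hπ : IsPolicy π) {d : S → ℝ}
    (hd : ∀ s, 0 ≤ d s) : ∀ t s, 0 ≤ M.stateDist π t d s := by
  intro t
  induction t with
  | zero => exact hd
  | succ t ih =>
    intro s'
    refine Finset.sum_nonneg fun s _ => Finset.sum_nonneg fun a _ => ?_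
    exact mul_nonneg (mul_nonneg (ih s) (hπ.1 s a)) (M.P_nonneg s a _)

lemma stateDist_sum (M : MDP S A) {π : S → A → ℝ} (hπ : IsPolicy π) (d : S → ℝ) :
    ∀ t, ∑ s, M.stateDist π t d s = ∑ s, d s := by
  intro t
  induction t with
  | zero => rfl
  | succ t ih =>
    calc ∑ s', ∑ s, ∑ a, M.stateDist π t d s * π s a * M.P s a s'
        = ∑ s, ∑ a, ∑ s', M.stateDist π t d s * π s a * M.P s a s' := by
          rw [Finset.sum_comm]; exact Finset.sum_congr rfl fun s _ => Finset.sum_comm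
      _ = ∑ s, M.stateDist π t d s := by
          refine Finset.sum_congr rfl fun s _ => ?_
          have h1 : ∀ a, ∑ s', M.stateDist π t d s * π s a * M.P s a s'
              = M.stateDist π t d s * π s a := by
            intro a; rw [← Finset.mul_sum, M.P_sum, mul_one]
          simp_rw [h1]
          rw [← Finset.mul_sum, hπ.2, mul_one]
      _ = ∑ s, d s := ih

lemma stateDist_linear (M : MDP S A) (π : S → A → ℝ) (d : S → ℝ) :
    ∀ t s', M.stateDist π t d s' = ∑ s, d s * M.stateDist π t (dirac s) s' := by
  intro t
  induction t with
  | zero =>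
    intro s'
    show d s' = ∑ s, d s * dirac s s'
    simp [dirac]
  | succ t ih =>
    intro s'
    show (∑ x, ∑ a, M.stateDist π t d x * π x a * M.P x a s')
        = ∑ s, d s * ∑ x, ∑ a, M.stateDist π t (dirac s) x * π x a * M.P x a s'
    have step : ∀ x, (∑ a, M.stateDist π t d x * π x a * M.P x a s')
        = ∑ s, d s * ∑ a, M.stateDist π t (dirac s) x * π x a * M.P x a s' := by
      intro x
      simp_rw [ih, Finset.sum_mul]
      rw [Finset.sum_comm]
      simp_rw [Finset.mul_sum]
      simp [mul_assoc]
    simp_rw [step]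
    rw [Finset.sum_comm]
    simp_rw [Finset.mul_sum]


lemma abs_weighted_le {d v : S → ℝ} (hd : ∀ s, 0 ≤ d s) (hsum : ∑ s, d s = 1) :
    |∑ s, d s * v s| ≤ ∑ s, |v s| := by
  calc |∑ s, d s * v s| ≤ ∑ s, |d s * v s| := Finset.abs_sum_le_sum_abs _ _
    _ ≤ ∑ s, |v s| := by
      refine Finset.sum_le_sum fun s _ => ?_
      rw [abs_mul, abs_of_nonneg (hd s)]
      have h1 : d s ≤ 1 := hsum ▸ Finset.single_le_sum (fun i _ => hd i) (Finset.mem_univ s)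
      nlinarith [abs_nonneg (v s)]

lemma summable_series (M : MDP S A) {π : S → A → ℝ} (hπ : IsPolicy π) {d : S → ℝ}
    (hd : ∀ s, 0 ≤ d s) (hdsum : ∑ s, d s = 1) (v : S → ℝ) :
    Summable (fun t : ℕ => M.γ ^ t * ∑ s, M.stateDist π t d s * v s) := by
  have hγ0 : (0:ℝ) ≤ M.γ := le_of_lt M.γ_pos
  have hgeo : Summable (fun t : ℕ => M.γ ^ t * ∑ s, |v s|) :=
    (summable_geometric_of_lt_one hγ0 M.γ_lt_one).mul_right _
  refine Summable.of_norm_bounded hgeo fun t => ?_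
  rw [Real.norm_eq_abs, abs_mul, abs_pow, abs_of_nonneg hγ0]
  refine mul_le_mul_of_nonneg_left ?_ (pow_nonneg hγ0 t)
  exact abs_weighted_le (M.stateDist_nonneg hπ hd t) ((M.stateDist_sum hπ d t).trans hdsum)







lemma dirac_nonneg (s x : S) : 0 ≤ dirac s x := by
  unfold dirac; split <;> norm_num

lemma dirac_sum (s : S) : ∑ x, dirac s x = 1 := by
  simp [dirac]

/-- η as a series over time, with state distribution starting at ρ0. -/
lemma eta_eq_tsum (M : MDP S A) {π : S → A → ℝ} (hπ : IsPolicy π) :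
    M.η π = ∑' t : ℕ, M.γ ^ t * ∑ s, M.stateDist π t M.ρ0 s * M.r s := by
  unfold η V
  simp_rw [← tsum_mul_left]
  rw [← Summable.tsum_finsetSum (fun s _ => ((M.summable_series hπ (dirac_nonneg s) (dirac_sum s) M.r).mul_left
    (M.ρ0 s)))]
  refine tsum_congr fun t => ?_
  simp_rw [M.stateDist_linear π M.ρ0 t, Finset.sum_mul, Finset.mul_sum]
  rw [Finset.sum_comm]
  exact Finset.sum_congr rfl fun s _ => Finset.sum_congr rfl fun x _ => by ring

lemma step_identity (M : MDP S A) (π : S → A → ℝ) {πStar : S → A → ℝ}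
    (hπStar : IsPolicy πStar) (t : ℕ) :
    ∑ s, ∑ a, M.stateDist πStar t M.ρ0 s * πStar s a * M.Adv π s a
      = ∑ s, M.stateDist πStar t M.ρ0 s * (M.r s - M.V π s)
        + M.γ * ∑ s', M.stateDist πStar (t+1) M.ρ0 s' * M.V π s' := by
  set D := M.stateDist πStar t M.ρ0 with hD
  have hsplit : ∀ s a, D s * πStar s a * M.Adv π s a
      = D s * (M.r s - M.V π s) * πStar s a
        + M.γ * ∑ s', D s * πStar s a * M.P s a s' * M.V π s' := by
    intro s a
    show D s * πStar s a * (M.r s + M.γ * ∑ s', M.P s a s' * M.V π s' - M.V π s) = _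
    have h1 : ∑ s', D s * πStar s a * M.P s a s' * M.V π s'
        = D s * πStar s a * ∑ s', M.P s a s' * M.V π s' := by
      rw [Finset.mul_sum]; exact Finset.sum_congr rfl fun s' _ => by ring
    rw [h1]; ring
  simp_rw [hsplit, Finset.sum_add_distrib]
  congr 1
  · refine Finset.sum_congr rfl fun s _ => ?_
    rw [← Finset.mul_sum, hπStar.2, mul_one]
  · simp_rw [← Finset.mul_sum]
    congr 1
    have hD1 : M.stateDist πStar (t+1) M.ρ0 = fun s' => ∑ s, ∑ a, D s * πStar s a * M.P s a s' :=
      rfl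
    rw [hD1]
    calc ∑ s, ∑ a, ∑ s', D s * πStar s a * M.P s a s' * M.V π s'
        = ∑ s, ∑ s', ∑ a, D s * πStar s a * M.P s a s' * M.V π s' :=
          Finset.sum_congr rfl fun s _ => Finset.sum_comm
      _ = ∑ s', ∑ s, ∑ a, D s * πStar s a * M.P s a s' * M.V π s' := Finset.sum_comm
      _ = ∑ s', (∑ s, ∑ a, D s * πStar s a * M.P s a s') * M.V π s' := by
          refine Finset.sum_congr rfl fun s' _ => ?_
          simp_rw [Finset.sum_mul]

end MDP

/-- If `η(π*) ≥ η(π)` then the expected discounted advantage sum of `π`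
along trajectories of `π*` is nonnegative. -/
theorem advSum_nonneg_of_performs_better (M : MDP S A) (π πStar : S → A → ℝ)
    (hπ : IsPolicy π) (hπStar : IsPolicy πStar)
    (h : M.η π ≤ M.η πStar) :
    0 ≤ M.advSum π πStar := by
  have hρnn := M.ρ0_nonneg
  have hρsum := M.ρ0_sum
  set D : ℕ → S → ℝ := fun t => M.stateDist πStar t M.ρ0 with hDdef
  have hsumr : Summable (fun t => M.γ ^ t * ∑ s, D t s * M.r s) :=
    M.summable_series hπStar hρnn hρsum M.r
  have hsumV : Summable (fun t => M.γ ^ t * ∑ s, D t s * M.V π s) :=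
    M.summable_series hπStar hρnn hρsum _
  set g : ℕ → ℝ := fun t => M.γ ^ t * ∑ s, D t s * M.V π s with hg
  have hgsucc : Summable (fun t => g (t + 1)) := (summable_nat_add_iff 1).2 hsumV
  have hterm : ∀ t, M.γ ^ t * ∑ s, ∑ a, D t s * πStar s a * M.Adv π s a
      = (M.γ ^ t * ∑ s, D t s * M.r s) + (g (t + 1) - g t) := by
    intro t
    rw [show (∑ s, ∑ a, D t s * πStar s a * M.Adv π s a)
        = ∑ s, M.stateDist πStar t M.ρ0 s * (M.r s - M.V π s)
          + M.γ * ∑ s', M.stateDist πStar (t+1) M.ρ0 s' * M.V π s'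
      from M.step_identity π hπStar t]
    have hsub : ∑ s, D t s * (M.r s - M.V π s)
        = ∑ s, D t s * M.r s - ∑ s, D t s * M.V π s := by
      simp [mul_sub, Finset.sum_sub_distrib]
    rw [show M.stateDist πStar t M.ρ0 = D t from rfl, hsub, hg]
    simp only [pow_succ]
    ring
  have key : M.advSum π πStar = M.η πStar - M.η π := by
    unfold MDP.advSum
    calc (∑' t : ℕ, M.γ ^ t * ∑ s, ∑ a, M.stateDist πStar t M.ρ0 s * πStar s a * M.Adv π s a)
        = ∑' t : ℕ, ((M.γ ^ t * ∑ s, D t s * M.r s) + (g (t + 1) - g t)) := tsum_congr hterm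
      _ = (∑' t : ℕ, M.γ ^ t * ∑ s, D t s * M.r s) + ∑' t : ℕ, (g (t + 1) - g t) :=
          Summable.tsum_add hsumr (hgsucc.sub hsumV)
      _ = M.η πStar + ((∑' t : ℕ, g (t + 1)) - ∑' t : ℕ, g t) := by
          rw [M.eta_eq_tsum hπStar, Summable.tsum_sub hgsucc hsumV]
      _ = M.η πStar - g 0 := by rw [Summable.tsum_eq_zero_add hsumV]; ring
      _ = M.η πStar - M.η π := by
          have : g 0 = M.η π := by
            simp only [hg, pow_zero, one_mul]
            rfl
          rw [this]
  rw [key]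
  linarith
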